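/- For a finite set of propositional formulas Γ over signature Σ and a subsignature P ⊆ Σ, the models over Σ\P of the Delgrande forgetting F(Γ,P) = Cn_Σ(Γ) ∩ L_{Σ\P} are exactly the reduction to Σ\P of the models of Γ over Σ. -/

import Mathlib

/-- Propositional formulas over atoms `ℕ`. -/
inductive Fm where
  | var : ℕ → Fm
  | top : Fm
  | bot : Fm
  | neg : Fm → Fm
  | conj : Fm → Fm → Fm
  | disj : Fm → Fm → Fm

/-- Evaluation of a formula under a total valuation. -/
def Fm.eval (v : ℕ → Bool) : Fm → Bool
  | var n => v n
  | top => true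
  | bot => false
  | neg φ => !(φ.eval v)
  | conj φ ψ => φ.eval v && ψ.eval v
  | disj φ ψ => φ.eval v || ψ.eval v

/-- The atoms mentioned in a formula. -/
def Fm.atoms : Fm → Set ℕ
  | var n => {n}
  | top => ∅
  | bot => ∅
  | neg φ => φ.atoms
  | conj φ ψ => φ.atoms ∪ ψ.atoms
  | disj φ ψ => φ.atoms ∪ ψ.atoms

/-- The language `L_S` over signature `S`: formulas mentioning only atoms in `S`. -/
def Lang (S : Set ℕ) : Set Fm := {φ | φ.atoms ⊆ S}

/-- Interpretations `Ω_S` over signature `S`. -/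
def Itp (S : Set ℕ) := ↥S → Bool

open Classical in
/-- Extend an interpretation over `S` to a total valuation (false outside `S`). -/
noncomputable def Itp.toVal {S : Set ℕ} (ω : Itp S) : ℕ → Bool :=
  fun n => if h : n ∈ S then ω ⟨n, h⟩ else false

/-- Satisfaction of a formula by an interpretation over `S`. -/
def Itp.sat {S : Set ℕ} (ω : Itp S) (φ : Fm) : Prop := φ.eval ω.toVal = true

/-- Restriction of an interpretation over `S` to a subsignature `S'`. -/
def Itp.restrict {S' S : Set ℕ} (h : S' ⊆ S) (ω : Itp S) : Itp S' :=
  fun n => ω ⟨n.1, h n.2⟩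

/-- Models over `S` of a set of formulas. -/
def Models (S : Set ℕ) (Γ : Set Fm) : Set (Itp S) := {ω | ∀ φ ∈ Γ, ω.sat φ}

/-- Semantic entailment over `S` between sets of formulas. -/
def Entails (S : Set ℕ) (Γ Δ : Set Fm) : Prop := Models S Γ ⊆ Models S Δ

/-- Consequence operator `Cn_S`. -/
def Cn (S : Set ℕ) (Γ : Set Fm) : Set Fm :=
  {φ | φ ∈ Lang S ∧ ∀ ω ∈ Models S Γ, ω.sat φ}

/-- Delgrande forgetting `F(Γ,P) = Cn_S(Γ) ∩ L_{S\P}`. -/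
def Forget (S : Set ℕ) (Γ : Set Fm) (P : Set ℕ) : Set Fm :=
  Cn S Γ ∩ Lang (S \ P)

/-- Reduction of a set of models to a subsignature. -/
def reduce {S' S : Set ℕ} (h : S' ⊆ S) (M : Set (Itp S)) : Set (Itp S') :=
  {ω' | ∃ ω ∈ M, ω.restrict h = ω'}

/-- Expansion of a set of models to a supersignature. -/
def expand {S' S : Set ℕ} (h : S' ⊆ S) (M' : Set (Itp S')) : Set (Itp S) :=
  {ω | ω.restrict h ∈ M'}

/-- An OCF over `S` is a ranking function attaining rank 0. -/
def IsOCF {S : Set ℕ} (κ : Itp S → ℕ) : Prop := ∃ ω, κ ω = 0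

/-- The models (rank-0 interpretations) of an OCF. -/
def OCFMod {S : Set ℕ} (κ : Itp S → ℕ) : Set (Itp S) := {ω | κ ω = 0}

/-- The belief set of an OCF over `S`. -/
def Bel (S : Set ℕ) (κ : Itp S → ℕ) : Set Fm :=
  {φ | φ ∈ Lang S ∧ ∀ ω ∈ OCFMod κ, ω.sat φ}

/-- Marginalisation of an OCF to a subsignature. -/
noncomputable def marg {S' S : Set ℕ} (h : S' ⊆ S) (κ : Itp S → ℕ) : Itp S' → ℕ :=
  fun ω' => sInf {n | ∃ ω : Itp S, ω.restrict h = ω' ∧ κ ω = n}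

/-- Lifting of an OCF over `S'` to a supersignature `S`. -/
def lift {S' S : Set ℕ} (h : S' ⊆ S) (κ' : Itp S' → ℕ) : Itp S → ℕ :=
  fun ω => κ' (ω.restrict h)

/-- Substitution of the atom `ρ` by formula `χ`. -/
def Fm.subst (ρ : ℕ) (χ : Fm) : Fm → Fm
  | var n => if n = ρ then χ else var n
  | top => top
  | bot => bot
  | neg φ => neg (subst ρ χ φ)
  | conj φ ψ => conj (subst ρ χ φ) (subst ρ χ ψ)
  | disj φ ψ => disj (subst ρ χ φ) (subst ρ χ ψ)

/-- Boole's atom forgetting: `forget(φ,ρ) = φ[ρ/⊤] ∨ φ[ρ/⊥]`. -/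
def boole (φ : Fm) (ρ : ℕ) : Fm := .disj (φ.subst ρ .top) (φ.subst ρ .bot)

lemma Fm.eval_congr (φ : Fm) (v w : ℕ → Bool) (h : ∀ n ∈ φ.atoms, v n = w n) :
    φ.eval v = φ.eval w := by
  induction φ with
  | var n => exact h n rfl
  | top => rfl
  | bot => rfl
  | neg φ ih => simp [Fm.eval, ih h]
  | conj φ ψ ih1 ih2 =>
      simp only [Fm.eval]
      rw [ih1 (fun n hn => h n (Or.inl hn)), ih2 (fun n hn => h n (Or.inr hn))]
  | disj φ ψ ih1 ih2 =>
      simp only [Fm.eval]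
      rw [ih1 (fun n hn => h n (Or.inl hn)), ih2 (fun n hn => h n (Or.inr hn))]

def charFm (l : List ℕ) (v : ℕ → Bool) : Fm :=
  l.foldr (fun a ψ => .conj (if v a then .var a else .neg (.var a)) ψ) .top

lemma charFm_atoms (l : List ℕ) (v : ℕ → Bool) :
    (charFm l v).atoms ⊆ {n | n ∈ l} := by
  induction l with
  | nil => simp [charFm, Fm.atoms]
  | cons a l ih =>
      intro n hn
      rcases hn with hn | hn
      · by_cases hv : v a
        · simp [hv, Fm.atoms] at hn
          simp [hn]
        · simp [hv, Fm.atoms] at hn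
          simp [hn]
      · exact List.mem_cons_of_mem a (ih hn)

lemma charFm_eval (l : List ℕ) (v w : ℕ → Bool) :
    (charFm l v).eval w = true ↔ ∀ a ∈ l, w a = v a := by
  induction l with
  | nil => simp [charFm, Fm.eval]
  | cons a l ih =>
      simp only [charFm, List.foldr] at ih ⊢
      rw [Fm.eval, Bool.and_eq_true]
      constructor
      · intro h b hb
        rcases List.mem_cons.mp hb with rfl | hb
        · by_cases hv : v b = true
          · rw [if_pos hv] at h; rw [hv]; exact h.1
          · rw [if_neg hv] at h
            have h1 := h.1
            simp only [Fm.eval, Bool.not_eq_true'] at h1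
            rw [h1, Bool.not_eq_true] at *
            rw [hv]
        · exact ih.mp h.2 b hb
      · intro h
        refine ⟨?_, ih.mpr fun b hb => h b (List.mem_cons_of_mem a hb)⟩
        have ha := h a List.mem_cons_self
        by_cases hv : v a = true
        · rw [if_pos hv]; simp only [Fm.eval]; rw [ha, hv]
        · rw [if_neg hv]; simp only [Fm.eval, Bool.not_eq_true']
          rw [Bool.not_eq_true] at hv
          rw [ha, hv]

theorem stmt0 (S P : Set ℕ) (hS : S.Finite) (hP : P ⊆ S)
    (Γ : Set Fm) (hΓfin : Γ.Finite) (hΓ : Γ ⊆ Lang S) :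
    Models (S \ P) (Forget S Γ P) = reduce Set.diff_subset (Models S Γ) := by
  have hSP : (S \ P).Finite := hS.subset Set.diff_subset
  -- toVal of restriction agrees with toVal on S \ P
  have hval : ∀ (ω : Itp S) (n : ℕ), n ∈ S \ P →
      (ω.restrict (Set.diff_subset : S \ P ⊆ S)).toVal n = ω.toVal n := by
    intro ω n hn
    simp [Itp.toVal, Itp.restrict, hn, hn.1]
  ext ω'
  constructor
  · intro hω'
    by_contra hcon
    set l := hSP.toFinset.toList with hl
    set χ := charFm l ω'.toVal with hχ
    have hatoms : χ.atoms ⊆ S \ P := by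
      intro n hn
      have := charFm_atoms l ω'.toVal hn
      simpa [hl, Set.Finite.mem_toFinset] using this
    have hsatchar : ∀ (ω : Itp S), ω.sat χ ↔ ω.restrict Set.diff_subset = ω' := by
      intro ω
      rw [Itp.sat, hχ, charFm_eval]
      constructor
      · intro h
        funext n
        have hn : n.1 ∈ S \ P := n.2
        have hmem : n.1 ∈ l := by simp [hl, Set.Finite.mem_toFinset, hn]
        have := h n.1 hmem
        have h1 : ω.toVal n.1 = ω ⟨n.1, hn.1⟩ := by simp [Itp.toVal, hn.1]
        have h2 : ω'.toVal n.1 = ω' n := by simp [Itp.toVal, hn]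
        rw [h1, h2] at this
        simpa [Itp.restrict] using this
      · intro h a ha
        have hn : a ∈ S \ P := by simpa [hl, Set.Finite.mem_toFinset] using ha
        have h1 : ω.toVal a = ω ⟨a, hn.1⟩ := by simp [Itp.toVal, hn.1]
        have h2 : ω'.toVal a = ω' ⟨a, hn⟩ := by simp [Itp.toVal, hn]
        rw [h1, h2, ← h]
        rfl
    have hforget : Fm.neg χ ∈ Forget S Γ P := by
      refine ⟨⟨fun n hn => (hatoms hn).1, ?_⟩, hatoms⟩
      intro ω hω
      have : ¬ ω.sat χ := by
        intro hs
        exact hcon ⟨ω, hω, (hsatchar ω).mp hs⟩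
      simp only [Itp.sat, Fm.eval, Bool.not_eq_true'] at this ⊢
      simp [Bool.not_eq_true] at this
      simp [this]
    have hn := hω' _ hforget
    have hp : ω'.sat χ := by
      rw [Itp.sat, hχ, charFm_eval]
      intro a _; rfl
    simp only [Itp.sat, Fm.eval, Bool.not_eq_true'] at hn
    rw [Itp.sat] at hp
    rw [hp] at hn
    simp at hn
  · rintro ⟨ω, hω, rfl⟩
    intro φ hφ
    obtain ⟨⟨_, hsem⟩, hlang⟩ := hφ
    have := hsem ω hω
    rw [Itp.sat] at this ⊢
    rw [Fm.eval_congr φ _ ω.toVal (fun n hn => hval ω n (hlang hn))]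
    exact this
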